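/- Let E be a real normed vector space, f : E → ℝ a nonzero continuous linear functional with operator norm ‖f‖, and c ∈ ℝ. Let H = {y ∈ E : f(y) ≤ c}. Then for every x ∈ E, the infimum distance from x to H equals max(f(x) − c, 0) / ‖f‖. -/
import Mathlib

/-- Let `E` be a real normed vector space, `f : E → ℝ` a nonzero continuous linear
functional, `c ∈ ℝ`, and `H = {y : f y ≤ c}` the corresponding half-space.
Then for every `x ∈ E`, `infDist(x, H) = max (f x - c) 0 / ‖f‖`. -/
theorem stmt6 {E : Type*} [NormedAddCommGroup E] [NormedSpace ℝ E]
    (f : E →L[ℝ] ℝ) (hf : f ≠ 0) (c : ℝ) (x : E) :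
    Metric.infDist x {y : E | f y ≤ c} = max (f x - c) 0 / ‖f‖ := by
  have hN : (0 : ℝ) < ‖f‖ := by rw [norm_pos_iff]; exact hf
  obtain ⟨u0, hu0⟩ : ∃ u : E, f u ≠ 0 := by
    by_contra h
    push_neg at h
    exact hf (by ext v; simpa using h v)
  have hne : ({y : E | f y ≤ c} : Set E).Nonempty :=
    ⟨(c / f u0) • u0, by simp [div_mul_cancel₀ _ hu0]⟩
  by_cases hx : f x ≤ c
  · rw [Metric.infDist_zero_of_mem (show x ∈ {y : E | f y ≤ c} from hx),
      max_eq_right (by linarith), zero_div]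
  push_neg at hx
  have hB : 0 < f x - c := by linarith
  rw [max_eq_left hB.le]
  set B := f x - c with hBdef
  set d := Metric.infDist x {y : E | f y ≤ c} with hd
  -- lower bound
  have hlow : B / ‖f‖ ≤ d := by
    have : Nonempty ({y : E | f y ≤ c} : Set E) := hne.to_subtype
    rw [hd, Metric.infDist_eq_iInf]
    apply le_ciInf
    rintro ⟨y, hy⟩
    simp only
    rw [div_le_iff₀ hN]
    have h1 : B ≤ f (x - y) := by
      simp only [Set.mem_setOf_eq] at hy
      rw [map_sub]; linarith
    calc B ≤ f (x - y) := h1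
      _ ≤ |f (x - y)| := le_abs_self _
      _ ≤ ‖f‖ * ‖x - y‖ := f.le_opNorm _
      _ = dist x y * ‖f‖ := by rw [dist_eq_norm]; ring
  -- key upper estimate
  have key : ∀ r : ℝ, 0 < r → r < ‖f‖ → d ≤ B / r := by
    intro r hr hrN
    obtain ⟨v, hv1, hv2⟩ := f.exists_lt_apply_of_lt_opNorm hrN
    rw [Real.norm_eq_abs] at hv2
    obtain ⟨u, hu1, hu2⟩ : ∃ u : E, ‖u‖ < 1 ∧ r < f u := by
      rcases abs_cases (f v) with ⟨h, _⟩ | ⟨h, _⟩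
      · exact ⟨v, hv1, by linarith⟩
      · exact ⟨-v, by simpa using hv1, by simp; linarith⟩
    have hfu : 0 < f u := hr.trans hu2
    set t := B / f u with ht
    have htpos : 0 < t := div_pos hB hfu
    have hmem : x - t • u ∈ {y : E | f y ≤ c} := by
      simp only [Set.mem_setOf_eq, map_sub, map_smul, smul_eq_mul, ht,
        div_mul_cancel₀ _ hfu.ne']
      linarith
    calc d ≤ dist x (x - t • u) := Metric.infDist_le_dist_of_mem hmem
      _ = ‖t • u‖ := by rw [dist_eq_norm, sub_sub_cancel]
      _ = t * ‖u‖ := by rw [norm_smul, Real.norm_eq_abs, abs_of_pos htpos]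
      _ ≤ t * 1 := by nlinarith
      _ = B / f u := by ring
      _ ≤ B / r := by
        apply div_le_div_of_nonneg_left hB.le hr hu2.le
  -- conclude
  have hdpos : 0 < d := lt_of_lt_of_le (div_pos hB hN) hlow
  refine le_antisymm ?_ hlow
  by_contra hcon
  push_neg at hcon
  have h1 : B / d < ‖f‖ := (div_lt_iff₀ hdpos).2 (by
    rw [div_lt_iff₀ hN] at hcon; linarith [mul_comm d ‖f‖])
  set r := (B / d + ‖f‖) / 2 with hr
  have hr0 : 0 < r := by positivity
  have hrlt : r < ‖f‖ := by rw [hr]; linarith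
  have h2 : B / d < r := by rw [hr]; linarith
  have h3 := key r hr0 hrlt
  rw [div_lt_iff₀ hdpos] at h2
  rw [le_div_iff₀ hr0] at h3
  nlinarith
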